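/- Let n be an integer, t > 0, and let γ : [0,t] → ℝ³ be a continuously differentiable curve with γ₁(s)² + γ₂(s)² ≠ 0 for all s ∈ [0,t]. Define the vector field F(x) = (2n/(x₁²+x₂²)) · (−x₂, x₁, 0) and the function w(x) = ((x₁ + i x₂)/√(x₁²+x₂²))^{2n} with values in the unit circle of ℂ. Then exp( i ∫₀ᵗ F(γ(s)) · γ′(s) ds ) = w(γ(t)) · w(γ(0))⁻¹. -/

import Mathlib

open Set Complex intervalIntegral
open Complex

lemma aux_deriv (n : ℤ) (x0 x1 : ℝ → ℝ) (a' b' : ℝ) (s : ℝ)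
    (h0 : HasDerivAt x0 a' s) (h1 : HasDerivAt x1 b' s)
    (hρ : x0 s ^ 2 + x1 s ^ 2 ≠ 0) :
    HasDerivAt (fun s => ((x0 s : ℂ) + Complex.I * (x1 s : ℂ)) ^ (2 * n) *
        (((x0 s ^ 2 + x1 s ^ 2 : ℝ) : ℂ)) ^ (-n))
      (Complex.I * ((2 * (n : ℝ) / (x0 s ^ 2 + x1 s ^ 2) * (-(x1 s) * a' + x0 s * b') : ℝ) : ℂ) *
        (((x0 s : ℂ) + Complex.I * (x1 s : ℂ)) ^ (2 * n) *
        (((x0 s ^ 2 + x1 s ^ 2 : ℝ) : ℂ)) ^ (-n))) s := by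
  set a := x0 s with ha
  set b := x1 s with hb
  have hz : HasDerivAt (fun s => ((x0 s : ℂ) + Complex.I * (x1 s : ℂ)))
      ((a' : ℂ) + Complex.I * (b' : ℂ)) s :=
    (h0.ofReal_comp).add ((h1.ofReal_comp).const_mul Complex.I)
  have hzne : ((a : ℂ) + Complex.I * (b : ℂ)) ≠ 0 := by
    intro h
    rw [Complex.ext_iff] at h
    simp at h
    apply hρ
    rw [h.1, h.2]; ring
  have hρr : HasDerivAt (fun s => x0 s ^ 2 + x1 s ^ 2) (2 * a * a' + 2 * b * b') s := by
    have := ((h0.pow 2).add (h1.pow 2))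
    refine this.congr_deriv ?_
    push_cast
    ring
  have hρc : HasDerivAt (fun s => ((x0 s ^ 2 + x1 s ^ 2 : ℝ) : ℂ))
      (((2 * a * a' + 2 * b * b' : ℝ) : ℂ)) s := hρr.ofReal_comp
  have hρcne : ((a ^ 2 + b ^ 2 : ℝ) : ℂ) ≠ 0 := by
    exact_mod_cast Complex.ofReal_ne_zero.mpr hρ
  have hzp : HasDerivAt (fun s => ((x0 s : ℂ) + Complex.I * (x1 s : ℂ)) ^ (2 * n))
      (((2 * n : ℤ) : ℂ) * ((a : ℂ) + Complex.I * (b : ℂ)) ^ (2 * n - 1) *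
        ((a' : ℂ) + Complex.I * (b' : ℂ))) s :=
    by have h := (hasDerivAt_zpow (2 * n) ((a : ℂ) + Complex.I * (b : ℂ)) (Or.inl hzne)).comp s hz; exact h
  have hρp : HasDerivAt (fun s => (((x0 s ^ 2 + x1 s ^ 2 : ℝ) : ℂ)) ^ (-n))
      (((-n : ℤ) : ℂ) * ((a ^ 2 + b ^ 2 : ℝ) : ℂ) ^ (-n - 1) *
        ((2 * a * a' + 2 * b * b' : ℝ) : ℂ)) s :=
    by have h := (hasDerivAt_zpow (-n) ((a ^ 2 + b ^ 2 : ℝ) : ℂ) (Or.inl hρcne)).comp s hρc; exact h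
  have := hzp.mul hρp
  refine this.congr_deriv ?_
  have e1 : ((a : ℂ) + Complex.I * (b : ℂ)) ^ (2 * n)
      = ((a : ℂ) + Complex.I * (b : ℂ)) ^ (2 * n - 1) * ((a : ℂ) + Complex.I * (b : ℂ)) := by
    rw [← zpow_add_one₀ hzne]; ring_nf
  have e2 : ((a ^ 2 + b ^ 2 : ℝ) : ℂ) ^ (-n)
      = ((a ^ 2 + b ^ 2 : ℝ) : ℂ) ^ (-n - 1) * ((a ^ 2 + b ^ 2 : ℝ) : ℂ) := by
    rw [← zpow_add_one₀ hρcne]; ring_nf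
  rw [e1, e2]
  generalize ((a : ℂ) + Complex.I * (b : ℂ)) ^ (2 * n - 1) = A
  generalize ((a ^ 2 + b ^ 2 : ℝ) : ℂ) ^ (-n - 1) = B
  have hρcc : ((a:ℂ)^2 + (b:ℂ)^2) ≠ 0 := by push_cast at hρcne ⊢; exact hρcne
  push_cast
  field_simp
  ring_nf
  simp only [Complex.I_sq]
  ring

lemma aux_ode (t : ℝ) (ht : 0 < t) (f : ℝ → ℝ) (u : ℝ → ℂ)
    (hfc : ContinuousOn f (Icc 0 t))
    (hu : ∀ s ∈ Icc (0:ℝ) t, HasDerivAt u (Complex.I * ((f s : ℝ) : ℂ) * u s) s)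
    (hu0 : u 0 ≠ 0) :
    Complex.exp (Complex.I * (((∫ s in (0:ℝ)..t, f s : ℝ)) : ℂ)) = u t * (u 0)⁻¹ := by
  set Iint : ℝ → ℝ := fun s => ∫ τ in (0:ℝ)..s, f τ with hIint
  have hint : ∀ x ∈ Icc (0:ℝ) t, IntervalIntegrable f MeasureTheory.volume 0 x := by
    intro x hx
    exact (hfc.mono (by rw [uIcc_of_le hx.1]; exact Icc_subset_Icc le_rfl hx.2)).intervalIntegrable
  have hmem : ∀ x ∈ Ico (0:ℝ) t, Icc (0:ℝ) t ∈ nhdsWithin x (Ici x) := by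
    intro x hx
    rw [mem_nhdsWithin]
    exact ⟨Iio t, isOpen_Iio, hx.2, fun y hy => ⟨le_trans hx.1 hy.2, le_of_lt hy.1⟩⟩
  have hmem' : ∀ x ∈ Ico (0:ℝ) t, Icc (0:ℝ) t ∈ nhdsWithin x (Ioi x) := by
    intro x hx
    rw [mem_nhdsWithin]
    exact ⟨Iio t, isOpen_Iio, hx.2, fun y hy => ⟨le_trans hx.1 (le_of_lt hy.2), le_of_lt hy.1⟩⟩
  have hIder : ∀ x ∈ Ico (0:ℝ) t, HasDerivWithinAt Iint (f x) (Ici x) x := by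
    intro x hx
    refine integral_hasDerivWithinAt_right (hint x ⟨hx.1, hx.2.le⟩)
      ⟨Icc 0 t, hmem' x hx, (hfc.aestronglyMeasurable measurableSet_Icc)⟩ ?_
    exact (hfc x ⟨hx.1, hx.2.le⟩).mono_of_mem_nhdsWithin (hmem' x hx)
  have hIcont : ContinuousOn Iint (Icc 0 t) := by
    have := continuousOn_primitive_interval (μ := MeasureTheory.volume) (a := (0:ℝ)) (b := t)
      ((hfc.mono (by rw [uIcc_of_le ht.le])).integrableOn_compact (by rw [uIcc_of_le ht.le]; exact isCompact_Icc))
    rwa [uIcc_of_le ht.le] at this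
  set v : ℝ → ℂ := fun s => u s * Complex.exp (-(Complex.I * ((Iint s : ℝ) : ℂ))) with hv
  have hvcont : ContinuousOn v (Icc 0 t) := by
    refine ContinuousOn.mul (fun s hs => ((hu s hs).continuousAt).continuousWithinAt) ?_
    exact ((continuousOn_const.mul (Complex.continuous_ofReal.comp_continuousOn hIcont)).neg).cexp
  have hvder : ∀ x ∈ Ico (0:ℝ) t, HasDerivWithinAt v 0 (Ici x) x := by
    intro x hx
    have hxI : x ∈ Icc (0:ℝ) t := ⟨hx.1, hx.2.le⟩
    have h1 : HasDerivWithinAt u (Complex.I * ((f x : ℝ) : ℂ) * u x) (Ici x) x :=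
      (hu x hxI).hasDerivWithinAt
    have h2 : HasDerivWithinAt (fun s => ((Iint s : ℝ) : ℂ)) ((f x : ℝ) : ℂ) (Ici x) x := by
      exact Complex.ofRealCLM.hasFDerivAt.comp_hasDerivWithinAt x (hIder x hx)
    have h3 : HasDerivWithinAt (fun s => -(Complex.I * ((Iint s : ℝ) : ℂ)))
        (-(Complex.I * ((f x : ℝ) : ℂ))) (Ici x) x := (h2.const_mul Complex.I).neg
    have h4 := h3.cexp
    have h5 := h1.mul h4
    refine h5.congr_deriv ?_
    ring
  have hconst := constant_of_has_deriv_right_zero hvcont hvder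
  have hvt : v t = v 0 := hconst t ⟨ht.le, le_rfl⟩
  have hI0 : Iint 0 = 0 := intervalIntegral.integral_same
  rw [hv] at hvt
  simp only [hI0, Complex.ofReal_zero, mul_zero, neg_zero, Complex.exp_zero, mul_one] at hvt
  have hexp : Complex.exp (-(Complex.I * ((Iint t : ℝ) : ℂ))) =
      (Complex.exp (Complex.I * ((Iint t : ℝ) : ℂ)))⁻¹ := Complex.exp_neg _
  rw [hexp] at hvt
  have hut : u t = u 0 * Complex.exp (Complex.I * ((Iint t : ℝ) : ℂ)) := by
    have he := Complex.exp_ne_zero (Complex.I * ((Iint t : ℝ) : ℂ))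
    field_simp at hvt
    linear_combination hvt
  rw [hut, mul_comm (u 0), mul_assoc, mul_inv_cancel₀ hu0, mul_one]

theorem stmt6 (n : ℤ) (t : ℝ) (ht : 0 < t) (γ γ' : ℝ → EuclideanSpace ℝ (Fin 3))
    (hγ : ∀ s ∈ Set.Icc (0 : ℝ) t, HasDerivAt γ (γ' s) s)
    (hγ' : ContinuousOn γ' (Set.Icc (0 : ℝ) t))
    (hρ : ∀ s ∈ Set.Icc (0 : ℝ) t, (γ s 0) ^ 2 + (γ s 1) ^ 2 ≠ 0)
    (F : EuclideanSpace ℝ (Fin 3) → EuclideanSpace ℝ (Fin 3))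
    (hF : ∀ x, F x = (2 * (n : ℝ) / ((x 0) ^ 2 + (x 1) ^ 2)) •
        (EuclideanSpace.equiv (Fin 3) ℝ).symm ![-(x 1), x 0, 0])
    (w : EuclideanSpace ℝ (Fin 3) → ℂ)
    (hw : ∀ x, w x = (((x 0 : ℂ) + Complex.I * (x 1 : ℂ)) /
        ((Real.sqrt ((x 0) ^ 2 + (x 1) ^ 2) : ℝ) : ℂ)) ^ (2 * n)) :
    Complex.exp (Complex.I * ((∫ s in (0 : ℝ)..t, (inner ℝ (F (γ s)) (γ' s) : ℝ)) : ℂ)) =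
      w (γ t) * (w (γ 0))⁻¹ := by
  -- the integrand in coordinates
  have hf_inner : ∀ s, (inner ℝ (F (γ s)) (γ' s) : ℝ)
      = 2 * (n : ℝ) / ((γ s 0) ^ 2 + (γ s 1) ^ 2) * (-(γ s 1) * γ' s 0 + γ s 0 * γ' s 1) := by
    intro s
    rw [hF]
    simp [PiLp.inner_apply, Fin.sum_univ_three]
    ring
  -- coordinate derivatives
  have h0 : ∀ s ∈ Icc (0:ℝ) t, HasDerivAt (fun s => γ s 0) (γ' s 0) s := by
    intro s hs
    exact (EuclideanSpace.proj (0 : Fin 3) : EuclideanSpace ℝ (Fin 3) →L[ℝ] ℝ).hasFDerivAt.comp_hasDerivAt s (hγ s hs)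
  have h1 : ∀ s ∈ Icc (0:ℝ) t, HasDerivAt (fun s => γ s 1) (γ' s 1) s := by
    intro s hs
    exact (EuclideanSpace.proj (1 : Fin 3) : EuclideanSpace ℝ (Fin 3) →L[ℝ] ℝ).hasFDerivAt.comp_hasDerivAt s (hγ s hs)
  -- continuity of coordinates
  have hγc : ContinuousOn γ (Icc 0 t) := fun s hs => ((hγ s hs).continuousAt).continuousWithinAt
  have h0c : ContinuousOn (fun s => γ s 0) (Icc 0 t) :=
    (EuclideanSpace.proj (0 : Fin 3) : EuclideanSpace ℝ (Fin 3) →L[ℝ] ℝ).continuous.comp_continuousOn hγc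
  have h1c : ContinuousOn (fun s => γ s 1) (Icc 0 t) :=
    (EuclideanSpace.proj (1 : Fin 3) : EuclideanSpace ℝ (Fin 3) →L[ℝ] ℝ).continuous.comp_continuousOn hγc
  have g0c : ContinuousOn (fun s => γ' s 0) (Icc 0 t) :=
    (EuclideanSpace.proj (0 : Fin 3) : EuclideanSpace ℝ (Fin 3) →L[ℝ] ℝ).continuous.comp_continuousOn hγ'
  have g1c : ContinuousOn (fun s => γ' s 1) (Icc 0 t) :=
    (EuclideanSpace.proj (1 : Fin 3) : EuclideanSpace ℝ (Fin 3) →L[ℝ] ℝ).continuous.comp_continuousOn hγ'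
  have hfc : ContinuousOn (fun s => (inner ℝ (F (γ s)) (γ' s) : ℝ)) (Icc 0 t) := by
    refine ContinuousOn.congr ?_ (fun s hs => hf_inner s)
    exact (continuousOn_const.div ((h0c.pow 2).add (h1c.pow 2)) hρ).mul
      (((h1c.neg).mul g0c).add (h0c.mul g1c))
  -- the unitary function u
  set u : ℝ → ℂ := fun s => ((γ s 0 : ℂ) + Complex.I * (γ s 1 : ℂ)) ^ (2 * n) *
      (((γ s 0 ^ 2 + γ s 1 ^ 2 : ℝ) : ℂ)) ^ (-n) with hu_def
  have hzne : ∀ s ∈ Icc (0:ℝ) t, ((γ s 0 : ℂ) + Complex.I * (γ s 1 : ℂ)) ≠ 0 := by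
    intro s hs h
    rw [Complex.ext_iff] at h
    simp at h
    apply hρ s hs
    rw [h.1, h.2]; ring
  have hρcne : ∀ s ∈ Icc (0:ℝ) t, ((γ s 0 ^ 2 + γ s 1 ^ 2 : ℝ) : ℂ) ≠ 0 := by
    intro s hs
    exact Complex.ofReal_ne_zero.mpr (hρ s hs)
  have hwu : ∀ s ∈ Icc (0:ℝ) t, w (γ s) = u s := by
    intro s hs
    have hρpos : (0:ℝ) < γ s 0 ^ 2 + γ s 1 ^ 2 :=
      lt_of_le_of_ne (by positivity) (Ne.symm (hρ s hs))
    have hsq : ((Real.sqrt (γ s 0 ^ 2 + γ s 1 ^ 2) : ℝ) : ℂ) ^ (2 * n)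
        = ((γ s 0 ^ 2 + γ s 1 ^ 2 : ℝ) : ℂ) ^ n := by
      rw [zpow_mul]
      norm_cast
      rw [Real.sq_sqrt hρpos.le]
    rw [hw, hu_def, div_zpow, hsq, div_eq_mul_inv, ← zpow_neg]
  have hu : ∀ s ∈ Icc (0:ℝ) t, HasDerivAt u
      (Complex.I * ((inner ℝ (F (γ s)) (γ' s) : ℝ) : ℂ) * u s) s := by
    intro s hs
    rw [hf_inner s]
    exact aux_deriv n (fun s => γ s 0) (fun s => γ s 1) (γ' s 0) (γ' s 1) s
      (h0 s hs) (h1 s hs) (hρ s hs)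
  have hu0 : u 0 ≠ 0 := by
    have h0t : (0:ℝ) ∈ Icc (0:ℝ) t := ⟨le_rfl, ht.le⟩
    exact mul_ne_zero (zpow_ne_zero _ (hzne 0 h0t)) (zpow_ne_zero _ (hρcne 0 h0t))
  rw [hwu t ⟨ht.le, le_rfl⟩, hwu 0 ⟨le_rfl, ht.le⟩,
    intervalIntegral.integral_ofReal]
  exact aux_ode t ht (fun s => (inner ℝ (F (γ s)) (γ' s) : ℝ)) u hfc hu hu0
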